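/- Let A be a real n×n matrix with xᵀAx > 0 for all nonzero real x (not necessarily symmetric), C a real m×m symmetric positive semidefinite matrix, B a real m×n matrix of full row rank, and α, β > 0 real numbers. Define the block matrices M = (1/2)·[[αI + A, Bᵀ], [−B, βI + C]] and N = (1/2)·[[αI − A, −Bᵀ], [B, βI − C]] of size (n+m)×(n+m). If λ ∈ ℂ and u ∈ ℂ^{n+m} is a nonzero vector with N u = λ M u (so λ is an eigenvalue of the iteration matrix M⁻¹N), then |λ| < 1. -/

import Mathlib

open Matrix Complex

lemma quad_re {k : ℕ} (P : Matrix (Fin k) (Fin k) ℝ) (v : Fin k → ℂ) :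
    (star v ⬝ᵥ (P.map Complex.ofReal) *ᵥ v).re
      = (fun i => (v i).re) ⬝ᵥ P *ᵥ (fun i => (v i).re)
        + (fun i => (v i).im) ⬝ᵥ P *ᵥ (fun i => (v i).im) := by
  simp only [dotProduct, mulVec, Matrix.map_apply, Finset.mul_sum, Complex.re_sum,
    Pi.star_apply, RCLike.star_def]
  rw [← Finset.sum_add_distrib]
  refine Finset.sum_congr rfl fun i _ => ?_
  rw [← Finset.sum_add_distrib]
  refine Finset.sum_congr rfl fun j _ => ?_
  simp [Complex.mul_re, Complex.mul_im]

lemma skew_re {k l : ℕ} (B : Matrix (Fin l) (Fin k) ℝ) (x : Fin k → ℂ) (y : Fin l → ℂ) :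
    (star x ⬝ᵥ (Bᵀ.map Complex.ofReal) *ᵥ y).re
      = (star y ⬝ᵥ (B.map Complex.ofReal) *ᵥ x).re := by
  simp only [dotProduct, mulVec, Matrix.map_apply, Matrix.transpose_apply, Finset.mul_sum,
    Complex.re_sum, Pi.star_apply, RCLike.star_def]
  rw [Finset.sum_comm]
  refine Finset.sum_congr rfl fun j _ => Finset.sum_congr rfl fun i _ => ?_
  simp [Complex.mul_re, Complex.mul_im]
  ring

lemma star_dot_self {k : ℕ} (v : Fin k → ℂ) :
    star v ⬝ᵥ v = ((∑ i, Complex.normSq (v i) : ℝ) : ℂ) := by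
  simp only [dotProduct, Pi.star_apply, RCLike.star_def, Complex.conj_mul', Complex.ofReal_sum]
  refine Finset.sum_congr rfl fun i _ => ?_
  rw [Complex.normSq_eq_norm_sq]
  push_cast
  rfl

lemma star_sum_elim {k l : ℕ} (x : Fin k → ℂ) (y : Fin l → ℂ) :
    star (Sum.elim x y) = Sum.elim (star x) (star y) := by
  funext i; cases i <;> rfl

lemma bt_inj {n m : ℕ} (B : Matrix (Fin m) (Fin n) ℝ) (hB : B.rank = m)
    (v : Fin m → ℝ) (hv : Bᵀ *ᵥ v = 0) : v = 0 := by
  have h1 : Bᵀ.rank = m := by rw [Matrix.rank_transpose]; exact hB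
  have h2 : Module.finrank ℝ (LinearMap.range (Bᵀ.mulVecLin))
      + Module.finrank ℝ (LinearMap.ker (Bᵀ.mulVecLin)) = m := by
    rw [LinearMap.finrank_range_add_finrank_ker]
    simp [Module.finrank_pi]
  have h3 : Module.finrank ℝ (LinearMap.ker (Bᵀ.mulVecLin)) = 0 := by
    have h4 : Bᵀ.rank = Module.finrank ℝ (LinearMap.range (Bᵀ.mulVecLin)) := rfl
    omega
  have h5 : LinearMap.ker (Bᵀ.mulVecLin) = ⊥ := Submodule.finrank_eq_zero.mp h3
  have h6 : v ∈ LinearMap.ker (Bᵀ.mulVecLin) := by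
    rw [LinearMap.mem_ker, Matrix.mulVecLin_apply]; exact hv
  rw [h5] at h6
  simpa using h6

/-- The shift-splitting matrix `M = (1/2)⬝[[αI + A, Bᵀ], [−B, βI + C]]`. -/
noncomputable def MSS {n m : ℕ} (A : Matrix (Fin n) (Fin n) ℝ) (B : Matrix (Fin m) (Fin n) ℝ)
    (C : Matrix (Fin m) (Fin m) ℝ) (α β : ℝ) :
    Matrix (Fin n ⊕ Fin m) (Fin n ⊕ Fin m) ℝ :=
  (1 / 2 : ℝ) • Matrix.fromBlocks (α • (1 : Matrix (Fin n) (Fin n) ℝ) + A) Bᵀ (-B)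
    (β • (1 : Matrix (Fin m) (Fin m) ℝ) + C)

/-- The shift-splitting matrix `N = (1/2)⬝[[αI − A, −Bᵀ], [B, βI − C]]`. -/
noncomputable def NSS {n m : ℕ} (A : Matrix (Fin n) (Fin n) ℝ) (B : Matrix (Fin m) (Fin n) ℝ)
    (C : Matrix (Fin m) (Fin m) ℝ) (α β : ℝ) :
    Matrix (Fin n ⊕ Fin m) (Fin n ⊕ Fin m) ℝ :=
  (1 / 2 : ℝ) • Matrix.fromBlocks (α • (1 : Matrix (Fin n) (Fin n) ℝ) - A) (-Bᵀ) B
    (β • (1 : Matrix (Fin m) (Fin m) ℝ) - C)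

lemma MSS_map {n m : ℕ} (A : Matrix (Fin n) (Fin n) ℝ) (B : Matrix (Fin m) (Fin n) ℝ)
    (C : Matrix (Fin m) (Fin m) ℝ) (α β : ℝ) :
    (MSS A B C α β).map Complex.ofReal
      = (1 / 2 : ℂ) • Matrix.fromBlocks
          ((α : ℂ) • (1 : Matrix (Fin n) (Fin n) ℂ) + A.map Complex.ofReal)
          (Bᵀ.map Complex.ofReal) (-(B.map Complex.ofReal))
          ((β : ℂ) • (1 : Matrix (Fin m) (Fin m) ℂ) + C.map Complex.ofReal) := by
  ext i j
  rcases i with i | i <;> rcases j with j | j <;>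
    simp [MSS, Matrix.map_apply, Matrix.one_apply, apply_ite] <;> push_cast <;> ring

lemma NSS_map {n m : ℕ} (A : Matrix (Fin n) (Fin n) ℝ) (B : Matrix (Fin m) (Fin n) ℝ)
    (C : Matrix (Fin m) (Fin m) ℝ) (α β : ℝ) :
    (NSS A B C α β).map Complex.ofReal
      = (1 / 2 : ℂ) • Matrix.fromBlocks
          ((α : ℂ) • (1 : Matrix (Fin n) (Fin n) ℂ) - A.map Complex.ofReal)
          (-(Bᵀ.map Complex.ofReal)) (B.map Complex.ofReal)
          ((β : ℂ) • (1 : Matrix (Fin m) (Fin m) ℂ) - C.map Complex.ofReal) := by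
  ext i j
  rcases i with i | i <;> rcases j with j | j <;>
    simp [NSS, Matrix.map_apply, Matrix.one_apply, apply_ite] <;> push_cast <;> ring

lemma mulVec_map_eq_zero {k l : ℕ} (P : Matrix (Fin k) (Fin l) ℝ) (v : Fin l → ℂ)
    (h : (P.map Complex.ofReal) *ᵥ v = 0) :
    P *ᵥ (fun j => (v j).re) = 0 ∧ P *ᵥ (fun j => (v j).im) = 0 := by
  constructor <;> funext i <;>
  · have h2 := congrArg Complex.re (congrFun h i)
    have h3 := congrArg Complex.im (congrFun h i)
    simp only [Matrix.mulVec, dotProduct, Matrix.map_apply, Complex.re_sum, Complex.im_sum,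
      Complex.mul_re, Complex.mul_im, Complex.ofReal_re, Complex.ofReal_im, Pi.zero_apply,
      Complex.zero_re, Complex.zero_im, zero_mul, sub_zero, zero_add, mul_zero] at h2 h3 ⊢
    first
      | linarith [h2]
      | simpa using h3

/-- For the shift-splitting of the generalized saddle point matrix with
positive definite (non-necessarily-symmetric) `A`, symmetric positive semidefinite `C`,
full-row-rank `B` and `α, β > 0`: any generalized eigenvalue `λ` with `N u = λ M u`,
`u ≠ 0`, satisfies `|λ| < 1`. -/
theorem eigenvalue_abs_lt_one
    (n m : ℕ) (A : Matrix (Fin n) (Fin n) ℝ)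
    (hA : ∀ x : Fin n → ℝ, x ≠ 0 → 0 < x ⬝ᵥ A.mulVec x)
    (C : Matrix (Fin m) (Fin m) ℝ) (hC : C.PosSemidef)
    (B : Matrix (Fin m) (Fin n) ℝ) (hB : B.rank = m)
    (α β : ℝ) (hα : 0 < α) (hβ : 0 < β)
    (lam : ℂ) (u : Fin n ⊕ Fin m → ℂ) (hu : u ≠ 0)
    (heig : ((NSS A B C α β).map Complex.ofReal).mulVec u
      = lam • ((MSS A B C α β).map Complex.ofReal).mulVec u) :
    ‖lam‖ < 1 := by
  classical
  set x : Fin n → ℂ := fun i => u (Sum.inl i) with hx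
  set y : Fin m → ℂ := fun j => u (Sum.inr j) with hy
  have hu' : u = Sum.elim x y := by funext i; cases i <;> rfl
  set A' := A.map Complex.ofReal
  set B' := B.map Complex.ofReal
  set Bt' := Bᵀ.map Complex.ofReal
  set C' := C.map Complex.ofReal
  set sA := star x ⬝ᵥ A' *ᵥ x with hsA
  set sB := star x ⬝ᵥ Bt' *ᵥ y with hsB
  set sB2 := star y ⬝ᵥ B' *ᵥ x with hsB2
  set sC := star y ⬝ᵥ C' *ᵥ y with hsC
  set S1 : ℝ := ∑ i, Complex.normSq (x i) with hS1
  set S2 : ℝ := ∑ j, Complex.normSq (y j) with hS2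
  set σ : ℂ := ((α * S1 + β * S2 : ℝ) : ℂ) with hσ
  set τ : ℂ := sA + sB - sB2 + sC with hτ
  -- rewrite heig in block form
  rw [MSS_map, NSS_map, hu', Matrix.smul_mulVec, Matrix.smul_mulVec,
    Matrix.fromBlocks_mulVec, Matrix.fromBlocks_mulVec] at heig
  simp only [Sum.elim_comp_inl, Sum.elim_comp_inr] at heig
  -- the scalar equation
  have hdot : σ - τ = lam * (σ + τ) := by
    have h := congrArg (fun w => (2 : ℂ) * (star (Sum.elim x y) ⬝ᵥ w)) heig
    simp only [star_sum_elim, dotProduct_smul, sumElim_dotProduct_sumElim,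
      dotProduct_add, Matrix.add_mulVec, Matrix.sub_mulVec, Matrix.neg_mulVec,
      Matrix.smul_mulVec, Matrix.one_mulVec, dotProduct_neg,
      dotProduct_smul, dotProduct_sub, smul_eq_mul] at h
    rw [star_dot_self x, star_dot_self y, ← hS1, ← hS2] at h
    rw [hσ, hτ, hsA, hsB, hsB2, hsC]
    push_cast
    linear_combination h
  -- positivity of σ
  have hS1nn : 0 ≤ S1 := Finset.sum_nonneg fun i _ => Complex.normSq_nonneg _
  have hS2nn : 0 ≤ S2 := Finset.sum_nonneg fun j _ => Complex.normSq_nonneg _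
  have hσpos : 0 < α * S1 + β * S2 := by
    obtain ⟨i, hi⟩ := Function.ne_iff.mp hu
    rcases i with i | i
    · have h1 : 0 < Complex.normSq (x i) := by
        simpa [Complex.normSq_pos] using hi
      have h2 : Complex.normSq (x i) ≤ S1 :=
        Finset.single_le_sum (fun j _ => Complex.normSq_nonneg (x j)) (Finset.mem_univ i)
      nlinarith
    · have h1 : 0 < Complex.normSq (y i) := by
        simpa [Complex.normSq_pos] using hi
      have h2 : Complex.normSq (y i) ≤ S2 :=
        Finset.single_le_sum (fun j _ => Complex.normSq_nonneg (y j)) (Finset.mem_univ i)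
      nlinarith
  -- nonnegativity facts
  have hAnn : ∀ v : Fin n → ℝ, 0 ≤ v ⬝ᵥ A *ᵥ v := by
    intro v
    by_cases hv : v = 0
    · simp [hv]
    · exact (hA v hv).le
  have hCnn : ∀ v : Fin m → ℝ, 0 ≤ v ⬝ᵥ C *ᵥ v := by
    intro v
    simpa using hC.dotProduct_mulVec_nonneg v
  have hsAre : sA.re = (fun i => (x i).re) ⬝ᵥ A *ᵥ (fun i => (x i).re)
      + (fun i => (x i).im) ⬝ᵥ A *ᵥ (fun i => (x i).im) := quad_re A x
  have hsCre : sC.re = (fun i => (y i).re) ⬝ᵥ C *ᵥ (fun i => (y i).re)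
      + (fun i => (y i).im) ⬝ᵥ C *ᵥ (fun i => (y i).im) := quad_re C y
  have hskew : sB.re = sB2.re := skew_re B x y
  have hτre : τ.re = sA.re + sC.re := by
    rw [hτ]
    simp only [Complex.add_re, Complex.sub_re]
    rw [hskew]; ring
  have hτnn : 0 ≤ τ.re := by
    rw [hτre, hsAre, hsCre]
    have := hAnn (fun i => (x i).re)
    have := hAnn (fun i => (x i).im)
    have := hCnn (fun i => (y i).re)
    have := hCnn (fun i => (y i).im)
    linarith
  have hσre : σ.re = α * S1 + β * S2 := by rw [hσ]; simp
  have hσim : σ.im = 0 := by rw [hσ]; simp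
  rcases hτnn.lt_or_eq with hτpos | hτzero
  · -- main case: τ.re > 0, hence |λ| < 1
    have hστ_ne : σ + τ ≠ 0 := by
      intro h0
      have : (σ + τ).re = 0 := by rw [h0]; simp
      rw [Complex.add_re, hσre] at this
      linarith
    have habs : ‖σ - τ‖ = ‖lam‖ * ‖σ + τ‖ := by
      rw [hdot, norm_mul]
    have hlt : ‖σ - τ‖ < ‖σ + τ‖ := by
      rw [Complex.norm_def, Complex.norm_def]
      apply Real.sqrt_lt_sqrt (Complex.normSq_nonneg _)
      simp only [Complex.normSq_apply, Complex.sub_re, Complex.add_re, Complex.sub_im,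
        Complex.add_im, hσim]
      nlinarith [hσre ▸ hσpos]
    have hpos : 0 < ‖σ + τ‖ := norm_pos_iff.mpr hστ_ne
    have := habs ▸ hlt
    calc ‖lam‖
        = ‖lam‖ * ‖σ + τ‖ / ‖σ + τ‖ := by
          field_simp
      _ < 1 := by
          rw [div_lt_one hpos, ← habs]; exact hlt
  · -- degenerate case: τ.re = 0 leads to contradiction
    exfalso
    have hsA0 : sA.re = 0 := by
      have h1 := hAnn (fun i => (x i).re)
      have h2 := hAnn (fun i => (x i).im)
      have h3 := hCnn (fun i => (y i).re)
      have h4 := hCnn (fun i => (y i).im)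
      rw [hτre, hsAre, hsCre] at hτzero
      rw [hsAre]
      linarith
    have hxre : (fun i => (x i).re) = 0 := by
      by_contra hne
      have := hA _ hne
      have h2 := hAnn (fun i => (x i).im)
      rw [hsAre] at hsA0
      linarith
    have hxim : (fun i => (x i).im) = 0 := by
      by_contra hne
      have := hA _ hne
      have h1 := hAnn (fun i => (x i).re)
      rw [hsAre] at hsA0
      linarith
    have hx0 : x = 0 := by
      funext i
      have h1 : (x i).re = 0 := congrFun hxre i
      have h2 : (x i).im = 0 := congrFun hxim i
      exact Complex.ext h1 h2
    have hlamne : lam ≠ -1 := by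
      intro h0
      rw [h0] at hdot
      have hσ0 : σ = 0 := by linear_combination (1/2 : ℂ) * hdot
      rw [hσ] at hσ0
      rw [Complex.ofReal_eq_zero] at hσ0
      linarith
    -- from the top block: Bᵀ y = 0
    have hw : Bt' *ᵥ y = 0 := by
      funext i
      have h2 := congrFun heig (Sum.inl i)
      simp only [hx0, Matrix.mulVec_zero, Pi.smul_apply, Sum.elim_inl, zero_add,
        Matrix.neg_mulVec, Pi.neg_apply, smul_eq_mul, Pi.zero_apply] at h2
      have h3 : (1 + lam) * ((Bt' *ᵥ y) i) = 0 := by linear_combination (-2 : ℂ) * h2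
      have h4 : (1 + lam) ≠ 0 := by
        intro h5
        apply hlamne
        linear_combination h5
      exact (mul_eq_zero.mp h3).resolve_left h4
    obtain ⟨hyre, hyim⟩ := mulVec_map_eq_zero Bᵀ y hw
    have hyre0 : (fun j => (y j).re) = 0 := bt_inj B hB _ hyre
    have hyim0 : (fun j => (y j).im) = 0 := bt_inj B hB _ hyim
    have hy0 : y = 0 := by
      funext j
      exact Complex.ext (congrFun hyre0 j) (congrFun hyim0 j)
    apply hu
    rw [hu', hx0, hy0]
    funext i
    cases i <;> rfl
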